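/- arXiv:2601.12266 — 5 statements merged into one kernel-verified Lean document; each statement's English description precedes it below -/
import Mathlib

section
/- Let λ, μ, δ > 0 with (λ + μ)δ < 1. Let S be an exponential random variable with rate μ and let X be a nonnegative random variable independent of S whose Laplace transform satisfies E[exp(−μX)] = (1 − (λ + μ)δ)/(1 − λδ). Then E[min(X, S)] = δ/(1 − λδ) and P(S < X) = μδ/(1 − λδ). -/
open MeasureTheory ProbabilityTheory

open Filter Set in
lemma lint_exp (μ : ℝ) (hμ : 0 < μ) (x : ℝ) (hx : 0 ≤ x) :
    ∫⁻ t in Set.Ioo 0 x, ENNReal.ofReal (μ * Real.exp (-μ*t)) =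
      ENNReal.ofReal (1 - Real.exp (-μ*x)) := by
  have hcont : Continuous (fun t : ℝ => μ * Real.exp (-μ*t)) := by continuity
  have hint : IntegrableOn (fun t => μ * Real.exp (-μ*t)) (Set.Ioo 0 x) :=
    (hcont.integrableOn_Icc).mono_set Set.Ioo_subset_Icc_self
  rw [← MeasureTheory.ofReal_integral_eq_lintegral_ofReal hint ?_]
  · congr 1
    have h1 : ∫ t in Set.Ioo 0 x, μ * Real.exp (-μ*t) = ∫ t in (0:ℝ)..x, μ * Real.exp (-μ*t) := by
      rw [intervalIntegral.integral_of_le hx, ← MeasureTheory.integral_Ioc_eq_integral_Ioo]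
    rw [h1]
    have : ∀ t ∈ Set.uIcc (0:ℝ) x, HasDerivAt (fun t => -Real.exp (-μ*t)) (μ * Real.exp (-μ*t)) t := by
      intro t _
      have h := ((Real.hasDerivAt_exp (-μ*t)).comp t ((hasDerivAt_id t).const_mul (-μ)))
      have := h.neg
      have h3 : HasDerivAt (fun t => -Real.exp (-μ*t)) (-(Real.exp (-μ*t) * (-μ * 1))) t := this
      exact h3.congr_deriv (by ring)
    rw [intervalIntegral.integral_eq_sub_of_hasDerivAt this (hcont.intervalIntegrable 0 x)]
    simp [Real.exp_zero]; ring
  · filter_upwards with t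
    positivity

lemma lint_ind (μ : ℝ) (hμ : 0 < μ) (x : ℝ) (hx : 0 ≤ x) :
    ∫⁻ t in Set.Ioi 0, Set.indicator (Set.Iio x)
      (fun t => ENNReal.ofReal (μ * Real.exp (-μ*t))) t =
      ENNReal.ofReal (1 - Real.exp (-μ*x)) := by
  rw [lintegral_indicator measurableSet_Iio _, Measure.restrict_restrict measurableSet_Iio]
  rw [show Set.Iio x ∩ Set.Ioi 0 = Set.Ioo 0 x by rw [Set.inter_comm]; rfl]
  exact lint_exp μ hμ x hx

open Filter Set in
lemma sigma_Ici (μ : ℝ) (hμ : 0 < μ) (σ : Measure ℝ) [IsProbabilityMeasure σ]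
    (hs : ∀ t : ℝ, 0 ≤ t → σ (Set.Ioi t) = ENNReal.ofReal (Real.exp (-μ*t)))
    (x : ℝ) (hx : 0 ≤ x) :
    σ (Set.Ici x) = ENNReal.ofReal (Real.exp (-μ*x)) := by
  rcases eq_or_lt_of_le hx with h0 | hx0
  · subst h0
    have h1 : σ (Set.Ioi (0:ℝ)) = 1 := by simpa using hs 0 le_rfl
    have h2 : σ (Set.Ici (0:ℝ)) ≤ 1 := prob_le_one
    have h3 : (1:ENNReal) ≤ σ (Set.Ici (0:ℝ)) := h1 ▸ measure_mono Set.Ioi_subset_Ici_self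
    simp [le_antisymm h2 h3]
  · set u : ℕ → ℝ := fun n => x - x/(n+1) with hu
    have hun : ∀ n, 0 ≤ u n ∧ u n < x := by
      intro n
      constructor
      · have : x/(n+1) ≤ x := by
          apply div_le_self hx0.le
          have : (0:ℝ) ≤ n := Nat.cast_nonneg n
          linarith
        simp [hu]; linarith
      · have : 0 < x/(n+1) := by positivity
        simp [hu]; linarith
    have hulim : Tendsto u atTop (nhds x) := by
      have h0 : Tendsto (fun n : ℕ => x/(n+1)) atTop (nhds 0) := by
        have h1 := tendsto_one_div_add_atTop_nhds_zero_nat.const_mul x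
        simpa [div_eq_mul_inv, one_div, mul_assoc] using h1
      simpa using (tendsto_const_nhds (x := x)).sub h0
    have hanti : Antitone (fun n => Set.Ioi (u n)) := by
      intro m n hmn
      apply Set.Ioi_subset_Ioi
      have : u m ≤ u n := by
        apply sub_le_sub_left
        apply div_le_div_of_nonneg_left hx0.le (by positivity)
        have : (m:ℝ) + 1 ≤ (n:ℝ) + 1 := by exact_mod_cast by omega
        linarith
      exact this
    have hiInter : ⋂ n, Set.Ioi (u n) = Set.Ici x := by
      ext t
      simp only [Set.mem_iInter, Set.mem_Ioi, Set.mem_Ici]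
      constructor
      · intro h
        exact le_of_tendsto hulim (Filter.Eventually.of_forall fun n => (h n).le)
      · intro h n
        exact lt_of_lt_of_le (hun n).2 h
    have h1 : Tendsto (σ ∘ fun n => Set.Ioi (u n)) atTop (nhds (σ (Set.Ici x))) := by
      rw [← hiInter]
      exact tendsto_measure_iInter_atTop
        (fun n => (measurableSet_Ioi).nullMeasurableSet) hanti ⟨0, measure_ne_top σ _⟩
    have h2 : Tendsto (σ ∘ fun n => Set.Ioi (u n)) atTop
        (nhds (ENNReal.ofReal (Real.exp (-μ*x)))) := by
      have : (σ ∘ fun n => Set.Ioi (u n)) = fun n => ENNReal.ofReal (Real.exp (-μ * u n)) := by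
        funext n; exact hs (u n) (hun n).1
      rw [this]
      apply (ENNReal.continuous_ofReal.tendsto _).comp
      exact (Real.continuous_exp.tendsto _).comp (hulim.const_mul (-μ))
    exact tendsto_nhds_unique h1 h2

open Filter Set in
lemma sigma_Iio (μ : ℝ) (hμ : 0 < μ) (σ : Measure ℝ) [IsProbabilityMeasure σ]
    (hs : ∀ t : ℝ, 0 ≤ t → σ (Set.Ioi t) = ENNReal.ofReal (Real.exp (-μ*t)))
    (x : ℝ) (hx : 0 ≤ x) :
    σ (Set.Iio x) = ENNReal.ofReal (1 - Real.exp (-μ*x)) := by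
  have h1 : Set.Iio x = (Set.Ici x)ᶜ := by simp
  rw [h1, measure_compl measurableSet_Ici (measure_ne_top σ _), sigma_Ici μ hμ σ hs x hx,
    measure_univ, ENNReal.ofReal_sub _ (Real.exp_nonneg _), ENNReal.ofReal_one]


/-- For rates `lam, μ > 0` and target delay `δ > 0` with `(lam + μ)δ < 1`:
if `S` is exponential with rate `μ`, and `X ≥ 0` is independent of `S` with
`E[exp(−μ X)] = (1 − (lam + μ)δ)/(1 − lam δ)`, then
`E[min(X, S)] = δ/(1 − lam δ)` and `P(S < X) = μδ/(1 − lam δ)`. -/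
theorem optimal_laplace_gives_binding_delay_and_utilization {Ω : Type*} [MeasureSpace Ω]
    [IsProbabilityMeasure (ℙ : Measure Ω)]
    (lam μ δ : ℝ) (hlam : 0 < lam) (hμ : 0 < μ) (hδ : 0 < δ)
    (hδ1 : (lam + μ) * δ < 1)
    (X S : Ω → ℝ) (hX : Measurable X) (hS : Measurable S)
    (hX0 : ∀ ω, 0 ≤ X ω)
    (hSexp : ∀ t : ℝ, 0 ≤ t → ℙ {ω | t < S ω} = ENNReal.ofReal (Real.exp (-μ * t)))
    (hindep : IndepFun X S ℙ)
    (hlaplace : ∫ ω, Real.exp (-μ * X ω) ∂ℙ = (1 - (lam + μ) * δ) / (1 - lam * δ)) :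
    ∫ ω, min (X ω) (S ω) ∂ℙ = δ / (1 - lam * δ) ∧
    (ℙ {ω | S ω < X ω}).toReal = μ * δ / (1 - lam * δ) := by
  set L : ℝ := (1 - (lam + μ) * δ) / (1 - lam * δ) with hLdef
  have h1 : 0 < 1 - lam * δ := by nlinarith
  have hLsub : 1 - L = μ * δ / (1 - lam * δ) := by
    rw [hLdef]; field_simp; ring
  have hLsub_pos : 0 < 1 - L := by
    rw [hLsub]; positivity
  -- S > 0 a.e.
  have hSpos : ∀ᵐ ω ∂(ℙ : Measure Ω), 0 < S ω := by
    have h0 : ℙ {ω | 0 < S ω} = 1 := by simpa using hSexp 0 le_rfl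
    have hm : MeasurableSet {ω | 0 < S ω} := hS measurableSet_Ioi
    rw [ae_iff]
    have : {ω | ¬ 0 < S ω} = {ω | 0 < S ω}ᶜ := rfl
    rw [this, measure_compl hm (measure_ne_top _ _), h0, measure_univ, tsub_self]
  have hmin_nn : 0 ≤ᵐ[(ℙ : Measure Ω)] fun ω => min (X ω) (S ω) := by
    filter_upwards [hSpos] with ω hω
    exact le_min (hX0 ω) hω.le
  -- integrability of exp(-μ X)
  have hexp_meas : Measurable fun ω => Real.exp (-μ * X ω) :=
    Real.measurable_exp.comp (hX.const_mul (-μ))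
  have hexp_int : Integrable (fun ω => Real.exp (-μ * X ω)) ℙ := by
    apply Integrable.mono' (integrable_const 1) hexp_meas.aestronglyMeasurable
    filter_upwards with ω
    rw [Real.norm_eq_abs, abs_of_nonneg (Real.exp_nonneg _)]
    rw [Real.exp_le_one_iff]
    have := hX0 ω
    nlinarith
  -- B : lintegral of 1 - exp(-μ X) equals ofReal (1 - L)
  have hintf : Integrable (fun ω => 1 - Real.exp (-μ * X ω)) ℙ :=
    (integrable_const 1).sub hexp_int
  have hB : ∫⁻ ω, ENNReal.ofReal (1 - Real.exp (-μ * X ω)) ∂ℙ = ENNReal.ofReal (1 - L) := by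
    rw [← ofReal_integral_eq_lintegral_ofReal hintf]
    · congr 1
      rw [integral_sub (integrable_const 1) hexp_int, hlaplace]
      simp
    · filter_upwards with ω
      have : Real.exp (-μ * X ω) ≤ 1 := by
        rw [Real.exp_le_one_iff]; have := hX0 ω; nlinarith
      simp only [Pi.zero_apply]
      linarith
  -- joint measurable set
  have hset : MeasurableSet {p : Ω × ℝ | p.2 < X p.1} :=
    measurableSet_lt measurable_snd (hX.comp measurable_fst)
  -- B' : B as double integral, swapped
  set g : Ω → ℝ → ENNReal := fun ω t =>
    Set.indicator {p : Ω × ℝ | p.2 < X p.1}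
      (fun p => ENNReal.ofReal (μ * Real.exp (-μ * p.2))) (ω, t) with hgdef
  have hg_meas : Measurable (Function.uncurry g) := by
    apply Measurable.indicator _ hset
    exact ENNReal.measurable_ofReal.comp
      ((Real.measurable_exp.comp (measurable_snd.const_mul (-μ))).const_mul μ)
  have hg_inner : ∀ ω, ∫⁻ t in Set.Ioi 0, g ω t = ENNReal.ofReal (1 - Real.exp (-μ * X ω)) := by
    intro ω
    have heq : (fun t => g ω t) = Set.indicator (Set.Iio (X ω))
        (fun t => ENNReal.ofReal (μ * Real.exp (-μ * t))) := by
      funext t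
      simp only [hgdef, Set.indicator, Set.mem_setOf_eq, Set.mem_Iio]
    rw [heq]
    exact lint_ind μ hμ (X ω) (hX0 ω)
  have hg_inner2 : ∀ t : ℝ, ∫⁻ ω, g ω t ∂ℙ =
      ENNReal.ofReal (μ * Real.exp (-μ * t)) * ℙ {ω | t < X ω} := by
    intro t
    have heq : (fun ω => g ω t) = Set.indicator {ω | t < X ω}
        (fun _ => ENNReal.ofReal (μ * Real.exp (-μ * t))) := by
      funext ω
      simp only [hgdef, Set.indicator, Set.mem_setOf_eq]
    rw [heq, lintegral_indicator (show MeasurableSet {ω | t < X ω} from hX measurableSet_Ioi), setLIntegral_const]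
  have hswap : ∫⁻ ω, ∫⁻ t in Set.Ioi 0, g ω t ∂(volume) ∂ℙ =
      ∫⁻ t in Set.Ioi 0, ∫⁻ ω, g ω t ∂ℙ ∂(volume) := by
    exact lintegral_lintegral_swap hg_meas.aemeasurable
  have hB2 : ∫⁻ t in Set.Ioi 0, ENNReal.ofReal (μ * Real.exp (-μ * t)) * ℙ {ω | t < X ω}
      ∂(volume) = ENNReal.ofReal (1 - L) := by
    rw [← hB]
    calc ∫⁻ t in Set.Ioi 0, ENNReal.ofReal (μ * Real.exp (-μ * t)) * ℙ {ω | t < X ω} ∂(volume)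
        = ∫⁻ t in Set.Ioi 0, ∫⁻ ω, g ω t ∂ℙ ∂(volume) := by
          apply lintegral_congr; intro t; rw [hg_inner2 t]
      _ = ∫⁻ ω, ∫⁻ t in Set.Ioi 0, g ω t ∂(volume) ∂ℙ := hswap.symm
      _ = ∫⁻ ω, ENNReal.ofReal (1 - Real.exp (-μ * X ω)) ∂ℙ := by
          apply lintegral_congr; intro ω; exact hg_inner ω
  -- layer cake for min
  have hA : ∫⁻ ω, ENNReal.ofReal (min (X ω) (S ω)) ∂ℙ =
      ∫⁻ t in Set.Ioi 0, ℙ {ω | t < min (X ω) (S ω)} ∂(volume) :=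
    lintegral_eq_lintegral_meas_lt ℙ hmin_nn (hX.min hS).aemeasurable
  have hsplit : ∀ t : ℝ, 0 ≤ t → ℙ {ω | t < min (X ω) (S ω)} =
      ℙ {ω | t < X ω} * ENNReal.ofReal (Real.exp (-μ * t)) := by
    intro t ht
    have hseteq : {ω | t < min (X ω) (S ω)} = X ⁻¹' (Set.Ioi t) ∩ S ⁻¹' (Set.Ioi t) := by
      ext ω; simp [lt_min_iff]
    rw [hseteq, hindep.measure_inter_preimage_eq_mul _ _ measurableSet_Ioi measurableSet_Ioi]
    congr 1
    exact hSexp t ht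
  have hA2 : ∫⁻ ω, ENNReal.ofReal (min (X ω) (S ω)) ∂ℙ =
      ∫⁻ t in Set.Ioi 0, ℙ {ω | t < X ω} * ENNReal.ofReal (Real.exp (-μ * t)) ∂(volume) := by
    rw [hA]
    apply setLIntegral_congr_fun measurableSet_Ioi
    intro t ht
    exact hsplit t (le_of_lt ht)
  -- μ * A = 1 - L
  have hmul : ENNReal.ofReal μ * ∫⁻ ω, ENNReal.ofReal (min (X ω) (S ω)) ∂ℙ =
      ENNReal.ofReal (1 - L) := by
    rw [hA2, ← lintegral_const_mul' _ _ ENNReal.ofReal_ne_top, ← hB2]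
    apply lintegral_congr
    intro t
    rw [ENNReal.ofReal_mul hμ.le]
    ring
  have hAval : ∫⁻ ω, ENNReal.ofReal (min (X ω) (S ω)) ∂ℙ = ENNReal.ofReal ((1 - L) / μ) := by
    rw [ENNReal.ofReal_div_of_pos hμ]
    rw [ENNReal.eq_div_iff (by simp [hμ]) ENNReal.ofReal_ne_top]
    exact hmul
  constructor
  · rw [integral_eq_lintegral_of_nonneg_ae hmin_nn (hX.min hS).aestronglyMeasurable, hAval,
      ENNReal.toReal_ofReal (by positivity)]
    rw [hLsub]
    field_simp
  · -- part 2
    set ν : Measure ℝ := Measure.map X ℙ with hνdef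
    set σm : Measure ℝ := Measure.map S ℙ with hσdef
    have : IsProbabilityMeasure ν := Measure.isProbabilityMeasure_map hX.aemeasurable
    have : IsProbabilityMeasure σm := Measure.isProbabilityMeasure_map hS.aemeasurable
    have hσIoi : ∀ t : ℝ, 0 ≤ t → σm (Set.Ioi t) = ENNReal.ofReal (Real.exp (-μ * t)) := by
      intro t ht
      rw [hσdef, Measure.map_apply hS measurableSet_Ioi]
      exact hSexp t ht
    have hmap : Measure.map (fun ω => (X ω, S ω)) ℙ = ν.prod σm :=
      (indepFun_iff_map_prod_eq_prod_map_map hX.aemeasurable hS.aemeasurable).mp hindep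
    have hltset : MeasurableSet {p : ℝ × ℝ | p.2 < p.1} :=
      measurableSet_lt measurable_snd measurable_fst
    have hC : ℙ {ω | S ω < X ω} = (ν.prod σm) {p : ℝ × ℝ | p.2 < p.1} := by
      rw [← hmap, Measure.map_apply (hX.prodMk hS) hltset]
      rfl
    have hprod : (ν.prod σm) {p : ℝ × ℝ | p.2 < p.1} = ∫⁻ x, σm (Set.Iio x) ∂ν := by
      rw [Measure.prod_apply hltset]
      rfl
    have hν0 : ∀ᵐ x ∂ν, 0 ≤ x := by
      rw [hνdef]
      rw [(ae_map_iff hX.aemeasurable measurableSet_Ici : _)]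
      exact Filter.Eventually.of_forall hX0
    have hfinal : (ν.prod σm) {p : ℝ × ℝ | p.2 < p.1} = ENNReal.ofReal (1 - L) := by
      rw [hprod, ← hB]
      have h1 : ∫⁻ x, σm (Set.Iio x) ∂ν = ∫⁻ x, ENNReal.ofReal (1 - Real.exp (-μ * x)) ∂ν := by
        apply lintegral_congr_ae
        filter_upwards [hν0] with x hx
        exact sigma_Iio μ hμ σm hσIoi x hx
      have hm2 : Measurable fun x : ℝ => ENNReal.ofReal (1 - Real.exp (-μ * x)) :=
        (measurable_const.sub (Real.measurable_exp.comp (measurable_id'.const_mul (-μ)))).ennreal_ofReal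
      rw [h1, hνdef, lintegral_map hm2 hX]
    rw [hC, hfinal, ENNReal.toReal_ofReal hLsub_pos.le, hLsub]
end

section
/- Let λ, μ, δ, L > 0 with λδ < 1 and p := μδ/(1 − λδ) ≤ 1. Let S be a nonnegative random variable with S ≤ L almost surely, E[S] = 1/μ, and P(S = L) = 0. Let X be a random variable independent of S with P(X = 0) = 1 − p and P(X ≥ L) = p. Then E[min(X, S)] = δ/(1 − λδ) and P(S < X) = p = μδ/(1 − λδ). -/
open MeasureTheory ProbabilityTheory

/-- Finite-support spot inter-arrival times: if `S ∈ [0, L]` a.s. with `E[S] = 1/μ`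
and `P(S = L) = 0`, and the independent maximal wait time `X` has
`P(X = 0) = 1 − p` and `P(X ≥ L) = p` with `p = μδ/(1 − lam δ)`, then the delay
constraint is binding, `E[min(X, S)] = δ/(1 − lam δ)`, and the spot-utilization
probability is `P(S < X) = μδ/(1 − lam δ)`. -/
theorem finite_support_optimal_wait {Ω : Type*} [MeasureSpace Ω]
    [IsProbabilityMeasure (ℙ : Measure Ω)]
    (lam μ δ L : ℝ) (hlam : 0 < lam) (hμ : 0 < μ) (hδ : 0 < δ) (hL : 0 < L)
    (hδ1 : lam * δ < 1) (hp : μ * δ / (1 - lam * δ) ≤ 1)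
    (X S : Ω → ℝ) (hX : Measurable X) (hS : Measurable S)
    (hS0 : ∀ ω, 0 ≤ S ω) (hSL : ∀ᵐ ω ∂ℙ, S ω ≤ L)
    (hSint : Integrable S ℙ) (hES : ∫ ω, S ω ∂ℙ = 1 / μ)
    (hSneL : ℙ {ω | S ω = L} = 0)
    (hindep : IndepFun X S ℙ)
    (hX0 : (ℙ {ω | X ω = 0}).toReal = 1 - μ * δ / (1 - lam * δ))
    (hXL : (ℙ {ω | L ≤ X ω}).toReal = μ * δ / (1 - lam * δ)) :
    ∫ ω, min (X ω) (S ω) ∂ℙ = δ / (1 - lam * δ) ∧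
    (ℙ {ω | S ω < X ω}).toReal = μ * δ / (1 - lam * δ) := by
  have h1δ : 0 < 1 - lam * δ := by linarith
  set p : ℝ := μ * δ / (1 - lam * δ) with hpdef
  set A : Set Ω := {ω | X ω = 0} with hAdef
  set B : Set Ω := {ω | L ≤ X ω} with hBdef
  have hAmeas : MeasurableSet A := hX (measurableSet_singleton 0)
  have hBmeas : MeasurableSet B := hX measurableSet_Ici
  have hdisj : Disjoint A B := by
    rw [Set.disjoint_left]
    intro ω hωA hωB
    have : X ω = 0 := hωA
    have : L ≤ X ω := hωB
    linarith
  -- ℙ (A ∪ B) = 1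
  have hAB : ℙ (A ∪ B) = 1 := by
    rw [measure_union hdisj hBmeas]
    have hA_ne : ℙ A ≠ ⊤ := measure_ne_top _ _
    have hB_ne : ℙ B ≠ ⊤ := measure_ne_top _ _
    have : (ℙ A + ℙ B).toReal = 1 := by
      rw [ENNReal.toReal_add hA_ne hB_ne, hX0, hXL]; ring
    have hne : ℙ A + ℙ B ≠ ⊤ := by finiteness
    rw [← ENNReal.ofReal_toReal hne, this, ENNReal.ofReal_one]
  have hABae : ∀ᵐ ω ∂ℙ, ω ∈ A ∪ B := by
    have : ℙ (A ∪ B)ᶜ = 0 := by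
      rw [measure_compl (hAmeas.union hBmeas) (measure_ne_top _ _), hAB, measure_univ,
        tsub_self]
    filter_upwards [measure_eq_zero_iff_ae_notMem.mp this] with ω hω
    exact Set.not_notMem.mp hω
  have hSltL : ∀ᵐ ω ∂ℙ, S ω < L := by
    have hne : ∀ᵐ ω ∂ℙ, S ω ≠ L := by
      filter_upwards [measure_eq_zero_iff_ae_notMem.mp hSneL] with ω hω using hω
    filter_upwards [hSL, hne] with ω h1 h2 using lt_of_le_of_ne h1 h2
  -- first part
  have hind_int : Integrable (B.indicator (fun _ => (1:ℝ))) ℙ :=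
    (integrable_const (1:ℝ)).indicator hBmeas
  have hindep2 : IndepFun (B.indicator (fun _ => (1:ℝ))) S ℙ := by
    have : B.indicator (fun _ => (1:ℝ)) = (Set.indicator (Set.Ici L) (fun _ => (1:ℝ))) ∘ X := by
      funext ω
      simp only [Function.comp_apply, Set.indicator_apply]
      rfl
    rw [this]
    exact hindep.comp (measurable_const.indicator measurableSet_Ici) measurable_id
  have hmul : ∫ ω, B.indicator (fun _ => (1:ℝ)) ω * S ω ∂ℙ = p * (1 / μ) := by
    have h2 : ∫ ω, B.indicator (fun _ => (1:ℝ)) ω * S ω ∂ℙ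
        = (∫ ω, B.indicator (fun _ => (1:ℝ)) ω ∂ℙ) * ∫ ω, S ω ∂ℙ :=
      hindep2.integral_fun_mul_eq_mul_integral hind_int.aestronglyMeasurable hSint.aestronglyMeasurable
    rw [h2, hES, integral_indicator_const (1:ℝ) hBmeas]
    simp [hXL, mul_comm]
    exact Or.inl hXL
  have hmin_eq : ∀ᵐ ω ∂ℙ, min (X ω) (S ω) = B.indicator (fun _ => (1:ℝ)) ω * S ω := by
    filter_upwards [hABae, hSL] with ω hω hSLω
    rcases hω with hωA | hωB
    · have hX0ω : X ω = 0 := hωA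
      have hωnB : ω ∉ B := by
        intro hωB; have : L ≤ X ω := hωB; rw [hX0ω] at this; linarith
      rw [Set.indicator_of_notMem hωnB, zero_mul, hX0ω, min_eq_left (hS0 ω)]
    · have hLX : L ≤ X ω := hωB
      rw [Set.indicator_of_mem hωB, one_mul, min_eq_right (le_trans hSLω hLX)]
  constructor
  · rw [integral_congr_ae hmin_eq, hmul, hpdef]
    field_simp
  · have hiff : ∀ᵐ ω ∂ℙ, (ω ∈ {ω | S ω < X ω} ↔ ω ∈ B) := by
      filter_upwards [hABae, hSltL] with ω hω hSωL
      rcases hω with hωA | hωB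
      · have hX0ω : X ω = 0 := hωA
        constructor
        · intro h
          exfalso
          have h' : S ω < X ω := h
          rw [hX0ω] at h'
          linarith [hS0 ω]
        · intro h
          exfalso
          have h' : L ≤ X ω := h
          rw [hX0ω] at h'
          linarith
      · have hLX : L ≤ X ω := hωB
        exact ⟨fun _ => hωB, fun _ => lt_of_lt_of_le hSωL hLX⟩
    rw [measure_congr (Filter.eventuallyEq_set.2 hiff), hXL]
end

section
/- Let L > 0, let S be uniformly distributed on [0, L], and let X be a nonnegative random variable independent of S. Then P(S < X) ≤ (2/L)·E[min(X, S)], and equality holds if and only if P(0 < X < L) = 0. -/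
open MeasureTheory ProbabilityTheory


lemma unif_Iio (L : ℝ) (hL : 0 < L) (x : ℝ) :
    ((ENNReal.ofReal L)⁻¹ • volume.restrict (Set.Icc (0:ℝ) L)) (Set.Iio x)
      = ENNReal.ofReal (min (max x 0) L / L) := by
  rw [Measure.smul_apply, Measure.restrict_apply measurableSet_Iio, smul_eq_mul]
  rcases le_or_gt x 0 with h0 | h0
  · have : Set.Iio x ∩ Set.Icc (0:ℝ) L = ∅ := by
      ext s; simp only [Set.mem_inter_iff, Set.mem_Iio, Set.mem_Icc, Set.mem_empty_iff_false,
        iff_false]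
      rintro ⟨h1, h2, _⟩; linarith
    rw [this]
    simp [max_eq_right h0, min_eq_left hL.le]
  · rcases le_or_gt x L with hxL | hxL
    · have : Set.Iio x ∩ Set.Icc (0:ℝ) L = Set.Ico 0 x := by
        ext s; simp only [Set.mem_inter_iff, Set.mem_Iio, Set.mem_Icc, Set.mem_Ico]
        constructor
        · rintro ⟨h1, h2, h3⟩; exact ⟨h2, h1⟩
        · rintro ⟨h1, h2⟩; exact ⟨h2, h1, by linarith⟩
      rw [this, Real.volume_Ico, sub_zero, max_eq_left h0.le, min_eq_left hxL,
        ENNReal.ofReal_div_of_pos hL, ENNReal.div_eq_inv_mul]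
    · have : Set.Iio x ∩ Set.Icc (0:ℝ) L = Set.Icc 0 L := by
        apply Set.inter_eq_self_of_subset_right
        intro s hs; exact lt_of_le_of_lt hs.2 hxL
      rw [this, Real.volume_Icc, sub_zero, max_eq_left h0.le, min_eq_right hxL.le,
        div_self hL.ne', ENNReal.ofReal_one,
        ENNReal.inv_mul_cancel (by simpa using hL) ENNReal.ofReal_ne_top]


lemma unif_int_min (L : ℝ) (hL : 0 < L) (x : ℝ) (hx : 0 ≤ x) :
    ∫ s, min x s ∂((ENNReal.ofReal L)⁻¹ • volume.restrict (Set.Icc (0:ℝ) L))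
      = ((min x L)^2/2 + (min x L) * (L - min x L)) / L := by
  set m := min x L with hm
  have hm0 : 0 ≤ m := le_min hx hL.le
  have hmL : m ≤ L := min_le_right _ _
  rw [integral_smul_measure]
  have h1 : ∫ s in Set.Icc (0:ℝ) L, min x s = ∫ s in (0:ℝ)..L, min x s := by
    rw [MeasureTheory.integral_Icc_eq_integral_Ioc, intervalIntegral.integral_of_le hL.le]
  have h2 : ∫ s in (0:ℝ)..L, min x s = ∫ s in (0:ℝ)..L, min m s := by
    apply intervalIntegral.integral_congr
    intro s hs
    rw [Set.uIcc_of_le hL.le] at hs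
    rcases le_or_gt x L with h | h
    · rw [hm, min_eq_left h]
    · rw [hm, min_eq_right h.le, min_eq_right hs.2, min_eq_right (hs.2.trans h.le)]
  have h3 : ∫ s in (0:ℝ)..m, min m s = m^2/2 := by
    rw [show ∫ s in (0:ℝ)..m, min m s = ∫ s in (0:ℝ)..m, s from
      intervalIntegral.integral_congr (fun s hs => by
        rw [Set.uIcc_of_le hm0] at hs; exact min_eq_right hs.2)]
    simpa [sq] using intervalIntegral.integral_id (a := (0:ℝ)) (b := m)
  have h4 : ∫ s in m..L, min m s = m * (L - m) := by
    rw [show ∫ s in m..L, min m s = ∫ s in m..L, m from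
      intervalIntegral.integral_congr (fun s hs => by
        rw [Set.uIcc_of_le hmL] at hs; exact min_eq_left hs.1)]
    rw [intervalIntegral.integral_const, smul_eq_mul]; ring
  have h5 : ∫ s in (0:ℝ)..L, min m s = m^2/2 + m * (L - m) := by
    rw [← intervalIntegral.integral_add_adjacent_intervals (a := (0:ℝ)) (b := m) (c := L)
      ((by fun_prop : Continuous fun s : ℝ => min m s).intervalIntegrable _ _)
      ((by fun_prop : Continuous fun s : ℝ => min m s).intervalIntegrable _ _), h3, h4]
  rw [h1, h2, h5, ENNReal.toReal_inv, ENNReal.toReal_ofReal hL.le, smul_eq_mul]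
  field_simp

/-- Uniform spot inter-arrival times: if `S` is uniformly distributed on `[0, L]` and
`X ≥ 0` is independent of `S`, then `P(S < X) ≤ (2/L) · E[min(X, S)]`, with equality
iff `X` puts no mass on the open interval `(0, L)`. -/
theorem uniform_spot_utilization_le {Ω : Type*} [MeasureSpace Ω]
    [IsProbabilityMeasure (ℙ : Measure Ω)]
    (L : ℝ) (hL : 0 < L)
    (X S : Ω → ℝ) (hX : Measurable X) (hS : Measurable S)
    (hX0 : ∀ ω, 0 ≤ X ω)
    (hSunif : MeasureTheory.pdf.IsUniform S (Set.Icc (0 : ℝ) L) ℙ volume)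
    (hindep : IndepFun X S ℙ) :
    (ℙ {ω | S ω < X ω}).toReal ≤ (2 / L) * ∫ ω, min (X ω) (S ω) ∂ℙ ∧
    ((ℙ {ω | S ω < X ω}).toReal = (2 / L) * ∫ ω, min (X ω) (S ω) ∂ℙ ↔
      ℙ {ω | 0 < X ω ∧ X ω < L} = 0) := by
  set ν : Measure ℝ := (ENNReal.ofReal L)⁻¹ • volume.restrict (Set.Icc (0:ℝ) L) with hνdef
  set μ : Measure ℝ := Measure.map X ℙ with hμdef
  have hν : Measure.map S ℙ = ν := by
    have h : Measure.map S ℙ = ProbabilityTheory.cond volume (Set.Icc (0:ℝ) L) := hSunif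
    rw [h]
    unfold ProbabilityTheory.cond
    rw [Real.volume_Icc, sub_zero]
  have hμprob : IsProbabilityMeasure μ := Measure.isProbabilityMeasure_map hX.aemeasurable
  have hνprob : IsProbabilityMeasure ν := hν ▸ Measure.isProbabilityMeasure_map hS.aemeasurable
  -- X's law lives on [0, ∞)
  have haeX : ∀ᵐ x ∂μ, (0:ℝ) ≤ x := by
    rw [hμdef, ae_map_iff hX.aemeasurable measurableSet_Ici]
    exact Filter.Eventually.of_forall hX0
  have haeν : ∀ᵐ s ∂ν, s ∈ Set.Icc (0:ℝ) L := by
    rw [hνdef]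
    exact Measure.ae_smul_measure (ae_restrict_mem measurableSet_Icc) _
  -- joint law
  have hmap : Measure.map (fun ω => (X ω, S ω)) ℙ = μ.prod ν := by
    rw [← hν, hμdef]
    exact (indepFun_iff_map_prod_eq_prod_map_map hX.aemeasurable hS.aemeasurable).mp hindep
  have hltmeas : MeasurableSet {p : ℝ × ℝ | p.2 < p.1} :=
    measurableSet_lt measurable_snd measurable_fst
  -- probability of S < X
  have hA : ℙ {ω | S ω < X ω} = ∫⁻ x, ENNReal.ofReal (min (max x 0) L / L) ∂μ := by
    have hset : {ω | S ω < X ω} = (fun ω => (X ω, S ω)) ⁻¹' {p : ℝ × ℝ | p.2 < p.1} := rfl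
    rw [hset, ← Measure.map_apply (hX.prodMk hS) hltmeas, hmap,
        Measure.prod_apply hltmeas]
    refine lintegral_congr fun x => ?_
    have h : Prod.mk x ⁻¹' {p : ℝ × ℝ | p.2 < p.1} = Set.Iio x := rfl
    rw [h, hνdef, unif_Iio L hL x]
  set F : ℝ → ℝ := fun x => min (max x 0) L / L with hFdef
  set G : ℝ → ℝ := fun x =>
    ((min (max x 0) L)^2/2 + (min (max x 0) L) * (L - min (max x 0) L)) / L with hGdef
  have hm0 : ∀ x : ℝ, 0 ≤ min (max x 0) L := fun x => le_min (le_max_right _ _) hL.le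
  have hmL : ∀ x : ℝ, min (max x 0) L ≤ L := fun x => min_le_right _ _
  have hFcont : Continuous F := ((continuous_id.max continuous_const).min continuous_const).div_const L
  have hGcont : Continuous G := by
    have hc : Continuous fun x : ℝ => min (max x 0) L :=
      (continuous_id.max continuous_const).min continuous_const
    apply Continuous.div_const
    fun_prop
  have hFnn : ∀ x, 0 ≤ F x := fun x => div_nonneg (hm0 x) hL.le
  have hAF : (ℙ {ω | S ω < X ω}).toReal = ∫ x, F x ∂μ := by
    rw [hA, MeasureTheory.integral_eq_lintegral_of_nonneg_ae
      (Filter.Eventually.of_forall hFnn) hFcont.aestronglyMeasurable]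
  -- integrability
  have hFint : Integrable F μ := by
    apply Integrable.mono' (integrable_const (1:ℝ)) hFcont.aestronglyMeasurable
    refine Filter.Eventually.of_forall fun x => ?_
    rw [Real.norm_eq_abs, abs_of_nonneg (hFnn x)]
    exact div_le_one_of_le₀ (hmL x) hL.le
  have hGint : Integrable G μ := by
    apply Integrable.mono' (integrable_const ((L^2/2 + L^2)/L)) hGcont.aestronglyMeasurable
    refine Filter.Eventually.of_forall fun x => ?_
    have h1 := hm0 x; have h2 := hmL x
    rw [Real.norm_eq_abs, hGdef]
    dsimp only
    rw [abs_of_nonneg (div_nonneg (by nlinarith) hL.le)]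
    apply div_le_div_of_nonneg_right (by nlinarith) hL.le
  -- expectation of min via Fubini
  have hcont_min : Continuous fun p : ℝ × ℝ => min p.1 p.2 := continuous_fst.min continuous_snd
  have hB1 : ∫ p : ℝ × ℝ, min p.1 p.2 ∂(μ.prod ν) = ∫ ω, min (X ω) (S ω) ∂ℙ := by
    rw [← hmap, integral_map (hX.prodMk hS).aemeasurable hcont_min.aestronglyMeasurable]
  have hqf : Measure.QuasiMeasurePreserving (Prod.fst : ℝ × ℝ → ℝ) (μ.prod ν) μ :=
    ⟨measurable_fst, by rw [Measure.map_fst_prod, measure_univ, one_smul]⟩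
  have hqs : Measure.QuasiMeasurePreserving (Prod.snd : ℝ × ℝ → ℝ) (μ.prod ν) ν :=
    ⟨measurable_snd, by rw [Measure.map_snd_prod, measure_univ, one_smul]⟩
  have haeP : ∀ᵐ p : ℝ × ℝ ∂(μ.prod ν), 0 ≤ p.1 ∧ p.2 ∈ Set.Icc (0:ℝ) L :=
    (hqf.ae haeX).and (hqs.ae haeν)
  have hintP : Integrable (fun p : ℝ × ℝ => min p.1 p.2) (μ.prod ν) := by
    apply Integrable.mono' (integrable_const L) hcont_min.aestronglyMeasurable
    filter_upwards [haeP] with p hp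
    rw [Real.norm_eq_abs, abs_le]
    constructor
    · have := le_min hp.1 hp.2.1
      linarith
    · exact le_trans (min_le_right _ _) hp.2.2
  have hB2 : ∫ p : ℝ × ℝ, min p.1 p.2 ∂(μ.prod ν) = ∫ x, ∫ s, min x s ∂ν ∂μ :=
    MeasureTheory.integral_prod _ hintP
  have hB3 : ∫ x, (∫ s, min x s ∂ν) ∂μ = ∫ x, G x ∂μ := by
    refine integral_congr_ae ?_
    filter_upwards [haeX] with x hx
    rw [hνdef, unif_int_min L hL x hx, hGdef]
    dsimp only
    rw [max_eq_left hx]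
  have key : (2 / L) * ∫ ω, min (X ω) (S ω) ∂ℙ = ∫ x, 2/L * G x ∂μ := by
    rw [← hB1, hB2, hB3, MeasureTheory.integral_const_mul]
  have hGint' : Integrable (fun x => 2/L * G x) μ := hGint.const_mul _
  -- the pointwise identity and nonnegativity
  have hid : ∀ x, 2/L * G x - F x = (min (max x 0) L) * (L - min (max x 0) L) / L^2 := by
    intro x
    rw [hFdef, hGdef]
    dsimp only
    field_simp
    ring
  have hnn : ∀ x, 0 ≤ 2/L * G x - F x := by
    intro x
    rw [hid x]
    have h1 := hm0 x; have h2 := hmL x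
    have : (0:ℝ) ≤ L - min (max x 0) L := by linarith
    positivity
  constructor
  · rw [hAF, key]
    exact integral_mono hFint hGint' fun x => by linarith [hnn x]
  · rw [hAF, key]
    have hsub : (∫ x, F x ∂μ) = (∫ x, 2/L * G x ∂μ) ↔ (∫ x, (2/L * G x - F x) ∂μ) = 0 := by
      rw [integral_sub hGint' hFint]
      constructor <;> intro h <;> linarith
    have hzero : (∫ x, (2/L * G x - F x) ∂μ) = 0 ↔ (fun x => 2/L * G x - F x) =ᵐ[μ] 0 :=
      integral_eq_zero_iff_of_nonneg_ae (Filter.Eventually.of_forall hnn) (hGint'.sub hFint)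
    have hset2 : {x : ℝ | ¬ (2/L * G x - F x = 0)} = Set.Ioo 0 L := by
      ext x
      simp only [Set.mem_setOf_eq, Set.mem_Ioo, hid x]
      constructor
      · intro h
        by_contra hc
        push_neg at hc
        apply h
        rcases le_or_gt x 0 with h0 | h0
        · rw [max_eq_right h0, min_eq_left hL.le]
          ring
        · have hxL := hc h0
          rw [max_eq_left h0.le, min_eq_right hxL]
          ring
      · rintro ⟨h0, hxL⟩
        rw [max_eq_left h0.le, min_eq_left hxL.le]
        have hpos : 0 < x * (L - x) / L^2 := by
          have : (0:ℝ) < L - x := by linarith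
          positivity
        exact hpos.ne'
    have hzero2 : ((fun x => 2/L * G x - F x) =ᵐ[μ] 0) ↔ μ (Set.Ioo 0 L) = 0 := by
      rw [Filter.EventuallyEq, ae_iff]
      simp only [Pi.zero_apply]
      rw [hset2]
    have hfinal : μ (Set.Ioo 0 L) = ℙ {ω | 0 < X ω ∧ X ω < L} := by
      rw [hμdef, Measure.map_apply hX measurableSet_Ioo]
      rfl
    rw [hsub, hzero, hzero2, hfinal]
end

section
/- Let ρ > 0 with ρ ≠ 1 and let k > 1. The function N ↦ k − (k − 1)·(1/ρ)·(1 − (ρ − 1)/(ρ^{N+1} − 1)), defined on positive integers N, is strictly decreasing in N. -/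
/-- The minimum achievable cost `E[C_N] = k − (k−1)(1/ρ)(1 − (ρ−1)/(ρ^{N+1} − 1))`
of the M/M/1/N system is strictly decreasing in the queue-length cap `N ≥ 1`,
for any traffic intensity `ρ > 0`, `ρ ≠ 1`, and on-demand cost `k > 1`. -/
theorem cost_strictAnti (ρ k : ℝ) (hρ : 0 < ρ) (hρ1 : ρ ≠ 1) (hk : 1 < k) :
    ∀ M N : ℕ, 1 ≤ M → M < N →
      k - (k - 1) * (1 / ρ) * (1 - (ρ - 1) / (ρ ^ (N + 1) - 1))
        < k - (k - 1) * (1 / ρ) * (1 - (ρ - 1) / (ρ ^ (M + 1) - 1)) := by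
  intro M N hM hMN
  have hρ1' : ρ - 1 ≠ 0 := sub_ne_zero.mpr hρ1
  have hS : ∀ n : ℕ, (ρ - 1) / (ρ ^ n - 1) = 1 / ∑ i ∈ Finset.range n, ρ ^ i := by
    intro n
    rw [← geom_sum_mul ρ n]
    rw [mul_comm, div_mul_eq_div_div, div_self hρ1']
  have hSpos : ∀ n : ℕ, 0 < ∑ i ∈ Finset.range (n + 1), ρ ^ i := by
    intro n
    exact Finset.sum_pos (fun i _ => pow_pos hρ i) (Finset.nonempty_range_iff.mpr (Nat.succ_ne_zero n))
  have hSmono : (∑ i ∈ Finset.range (M + 1), ρ ^ i) < ∑ i ∈ Finset.range (N + 1), ρ ^ i := by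
    refine Finset.sum_lt_sum_of_subset (Finset.range_subset_range.mpr (by omega)) (i := M + 1) ?_ ?_ ?_ ?_
    · exact Finset.mem_range.mpr (by omega)
    · simp
    · exact pow_pos hρ _
    · intro j _ _; exact le_of_lt (pow_pos hρ j)
  have hf : (ρ - 1) / (ρ ^ (N + 1) - 1) < (ρ - 1) / (ρ ^ (M + 1) - 1) := by
    rw [hS, hS]
    exact one_div_lt_one_div_of_lt (hSpos _) hSmono
  have hc : 0 < (k - 1) * (1 / ρ) := mul_pos (sub_pos.mpr hk) (by positivity)
  nlinarith [hf, hc]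
end

section
/- Let ρ > 0. The function N ↦ (∑_{n=1}^N n·ρ^n)/(1 + ∑_{n=1}^N ρ^n), defined on nonnegative integers N, is strictly increasing in N. -/
/-- The normalized minimum delay `λ·δ_N = (∑_{n=1}^N n ρ^n)/(1 + ∑_{n=1}^N ρ^n)`
of the M/M/1/N system is strictly increasing in the queue-length cap `N ≥ 0`,
for any traffic intensity `ρ > 0`. -/
theorem delay_strictMono (ρ : ℝ) (hρ : 0 < ρ) :
    StrictMono (fun N : ℕ =>
      (∑ n ∈ Finset.Icc 1 N, (n : ℝ) * ρ ^ n) / (1 + ∑ n ∈ Finset.Icc 1 N, ρ ^ n)) := by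
  apply strictMono_nat_of_lt_succ
  intro N
  set A : ℝ := ∑ n ∈ Finset.Icc 1 N, (n : ℝ) * ρ ^ n with hA
  set S : ℝ := ∑ n ∈ Finset.Icc 1 N, ρ ^ n with hS
  have hS0 : 0 ≤ S := Finset.sum_nonneg fun n _ => (pow_pos hρ n).le
  have hB : (0:ℝ) < 1 + S := by linarith
  have hAle : A ≤ N * S := by
    rw [hA, hS, Finset.mul_sum]
    apply Finset.sum_le_sum
    intro n hn
    have : (n : ℝ) ≤ N := by
      exact_mod_cast (Finset.mem_Icc.mp hn).2
    exact mul_le_mul_of_nonneg_right this (pow_pos hρ n).le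
  have hsucc : Finset.Icc 1 (N + 1) = insert (N + 1) (Finset.Icc 1 N) := by
    rw [← Finset.insert_Icc_right_eq_Icc_add_one (by omega)]
  have h1 : ∑ n ∈ Finset.Icc 1 (N + 1), (n : ℝ) * ρ ^ n = A + (N + 1) * ρ ^ (N + 1) := by
    rw [hsucc, Finset.sum_insert (by simp), hA]
    push_cast; ring
  have h2 : ∑ n ∈ Finset.Icc 1 (N + 1), ρ ^ n = S + ρ ^ (N + 1) := by
    rw [hsucc, Finset.sum_insert (by simp), hS]; ring
  rw [h1, h2]
  have hp : (0:ℝ) < ρ ^ (N + 1) := pow_pos hρ _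
  rw [div_lt_div_iff₀ hB (by linarith)]
  have key : A < (N + 1) * (1 + S) := by nlinarith
  nlinarith
end
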